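/- Let G be a group acting on a set X and let g₁, g₂ ∈ G. For i = 1, 2 let A_i ⊆ X, let B_i ⊆ A_i, and let p_i : X → X be a map with p_i(x) ∈ A_i for all x ∈ X; set X_i := p_i⁻¹(A_i \ B_i). Assume: (1) X₁ and X₂ are nonempty and X₁ ∩ X₂ = ∅; (2) for i = 1, 2 and every nonzero integer n, g_iⁿ(p_i⁻¹(B_i)) ⊆ X_i. Then for every nonzero integer n and all i ≠ j one has g_iⁿ(X_j) ⊆ X_i, and consequently the subgroup generated by g₁ and g₂ is free with basis {g₁, g₂}. -/

import Mathlib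

open Pointwise

/-- Let `G` act on a set `X` and let `g₁ g₂ : G`. For `i = 1, 2` let `A_i ⊆ X`, `B_i ⊆ A_i`,
and let `p_i : X → X` be a map with `p_i x ∈ A_i` for all `x`; set `X_i := p_i⁻¹(A_i \ B_i)`.
Assume `X₁, X₂` are nonempty and disjoint, and that `g_i ^ n` maps `p_i⁻¹(B_i)` into `X_i`
for every nonzero integer `n`. Then for every nonzero integer `n`, `g₁ ^ n` maps `X₂` into
`X₁` and `g₂ ^ n` maps `X₁` into `X₂`; consequently the subgroup generated by `g₁, g₂` is
free with basis `{g₁, g₂}` (the homomorphism from the free group on two generators sending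
the generators to `g₁` and `g₂` is injective). -/
theorem pingPong_setup {G X : Type*} [Group G] [MulAction G X] (g₁ g₂ : G)
    (A₁ A₂ B₁ B₂ : Set X) (hBA₁ : B₁ ⊆ A₁) (hBA₂ : B₂ ⊆ A₂)
    (p₁ p₂ : X → X) (hp₁ : ∀ x : X, p₁ x ∈ A₁) (hp₂ : ∀ x : X, p₂ x ∈ A₂)
    (X₁ X₂ : Set X) (hX₁ : X₁ = p₁ ⁻¹' (A₁ \ B₁)) (hX₂ : X₂ = p₂ ⁻¹' (A₂ \ B₂))
    (hne₁ : X₁.Nonempty) (hne₂ : X₂.Nonempty) (hdisj : X₁ ∩ X₂ = ∅)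
    (h₁ : ∀ n : ℤ, n ≠ 0 → (g₁ ^ n) • (p₁ ⁻¹' B₁) ⊆ X₁)
    (h₂ : ∀ n : ℤ, n ≠ 0 → (g₂ ^ n) • (p₂ ⁻¹' B₂) ⊆ X₂) :
    (∀ n : ℤ, n ≠ 0 → (g₁ ^ n) • X₂ ⊆ X₁ ∧ (g₂ ^ n) • X₁ ⊆ X₂) ∧
      Function.Injective ⇑(FreeGroup.lift ![g₁, g₂]) := by

  have hsub₂ : X₂ ⊆ p₁ ⁻¹' B₁ := by
    intro x hx
    have hx1 : x ∉ X₁ := fun h => Set.eq_empty_iff_forall_notMem.mp hdisj x ⟨h, hx⟩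
    rw [hX₁] at hx1
    simp only [Set.mem_preimage, Set.mem_diff, not_and, not_not] at hx1
    exact hx1 (hp₁ x)
  have hsub₁ : X₁ ⊆ p₂ ⁻¹' B₂ := by
    intro x hx
    have hx2 : x ∉ X₂ := fun h => Set.eq_empty_iff_forall_notMem.mp hdisj x ⟨hx, h⟩
    rw [hX₂] at hx2
    simp only [Set.mem_preimage, Set.mem_diff, not_and, not_not] at hx2
    exact hx2 (hp₂ x)
  have key : ∀ n : ℤ, n ≠ 0 → (g₁ ^ n) • X₂ ⊆ X₁ ∧ (g₂ ^ n) • X₁ ⊆ X₂ := fun n hn =>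
    ⟨(Set.smul_set_mono hsub₂).trans (h₁ n hn), (Set.smul_set_mono hsub₁).trans (h₂ n hn)⟩
  refine ⟨key, ?_⟩
  have heq : FreeGroup.lift ![g₁, g₂] =
      (Monoid.CoprodI.lift fun i : Fin 2 => FreeGroup.lift fun _ : Unit => ![g₁, g₂] i).comp
        (freeGroupEquivCoprodI (ι := Fin 2)).toMonoidHom := by
    ext i
    simp
  rw [heq, MonoidHom.coe_comp]
  refine Function.Injective.comp ?_ (MulEquiv.injective _)
  have hD : Disjoint X₁ X₂ := Set.disjoint_iff_inter_eq_empty.mpr hdisj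
  have main : ∀ (i j : Fin 2), i ≠ j →
      ∀ h : FreeGroup Unit, h ≠ 1 →
        (FreeGroup.lift fun _ : Unit => ![g₁, g₂] i) h • ![X₁, X₂] j ⊆ ![X₁, X₂] i := by
    intro i j hij
    refine FreeGroup.freeGroupUnitEquivInt.forall_congr_left.mpr ?_
    intro n hne1
    have hn : n ≠ 0 := by
      rintro rfl
      exact hne1 (by simp [FreeGroup.freeGroupUnitEquivInt])
    change (FreeGroup.lift fun _ : Unit => ![g₁, g₂] i) (FreeGroup.of () ^ n) • ![X₁, X₂] j ⊆ ![X₁, X₂] i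
    simp only [map_zpow, FreeGroup.lift_apply_of]
    fin_cases i <;> fin_cases j <;> simp_all <;>
      first | exact (key n hn).1 | exact (key n hn).2
  apply Monoid.CoprodI.lift_injective_of_ping_pong _ ?_ ![X₁, X₂] ?_ ?_ main
  · right
    exact ⟨0, by
      have h3 : (3 : Cardinal) ≤ Cardinal.mk ℤ := by
        refine le_trans ?_ (Cardinal.aleph0_le_mk ℤ)
        exact_mod_cast (Cardinal.nat_lt_aleph0 3).le
      simpa using h3.trans_eq (Cardinal.mk_congr FreeGroup.freeGroupUnitEquivInt).symm⟩
  · intro i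
    fin_cases i
    · simpa using hne₁
    · simpa using hne₂
  · intro i j hij
    fin_cases i <;> fin_cases j <;> simp_all <;>
      first | exact hD | exact hD.symm
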